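/- Let K ⊆ ℝ be a subfield and f ∈ K[X] an irreducible polynomial of odd prime degree p that is solvable by radicals over K. Then f has exactly one real root or all p of its roots are real. -/

import Mathlib

open Polynomial
open MulAction Subgroup

/-- `F'` is a simple radical extension of `F` of prime exponent. -/
def IsSimpleRadicalExt (F F' : Subfield ℂ) : Prop :=
  ∃ (α : ℂ) (q : ℕ), q.Prime ∧ α ^ q ∈ F ∧ F' = Subfield.closure (↑F ∪ {α})

/-- `L` is a radical extension of `K`: there is a finite tower of simple radical
extensions from `K` to `L`. -/
def IsRadicalExt (K L : Subfield ℂ) : Prop :=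
  ∃ (n : ℕ) (c : Fin (n + 1) → Subfield ℂ), c 0 = K ∧ c (Fin.last n) = L ∧
    ∀ i : Fin n, IsSimpleRadicalExt (c i.castSucc) (c i.succ)


theorem solvable_fix_two {G X : Type*} [Group G] [MulAction G X] [Finite X]
    [MulAction.IsPretransitive G X] [Group.IsSolvable G]
    (hp : (Nat.card X).Prime)
    (hfaith : ∀ g : G, (∀ x : X, g • x = x) → g = 1)
    {σ : G} {x y : X} (hxy : x ≠ y) (hx : σ • x = x) (hy : σ • y = y) :
    ∀ z : X, σ • z = z := by
  classical
  obtain ⟨m, hm⟩ := Group.IsSolvable.solvable (G := G)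
  have hfind : ∃ k, derivedSeries G k = ⊥ := ⟨m, hm⟩
  rcases hEq : Nat.find hfind with _ | n
  · -- G is trivial
    have hkbot : derivedSeries G 0 = ⊥ := by rw [← hEq]; exact Nat.find_spec hfind
    have : σ = 1 := by
      have h : (⊤ : Subgroup G) = ⊥ := hkbot
      exact Subgroup.mem_bot.mp (h ▸ Subgroup.mem_top σ)
    intro z; rw [this, one_smul]
  have hkbot : derivedSeries G (n + 1) = ⊥ := by rw [← hEq]; exact Nat.find_spec hfind
  set N : Subgroup G := derivedSeries G n with hN
  have hNbot : N ≠ ⊥ := Nat.find_min hfind (by omega)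
  have hNcomm : ⁅N, N⁆ = ⊥ := hkbot
  haveI hNnormal : N.Normal := derivedSeries_normal G n
  -- commutativity in N
  have hcomm : ∀ a ∈ N, ∀ b ∈ N, a * b = b * a := fun a ha b hb =>
    commutatorElement_eq_one_iff_mul_comm.mp
      (Subgroup.mem_bot.mp (hNcomm ▸ commutator_mem_commutator ha hb))
  -- N acts pretransitively: its orbits are blocks of prime-card X
  obtain ⟨⟨g, hgN⟩, hg1'⟩ := Subgroup.ne_bot_iff_exists_ne_one.mp hNbot
  have hg1 : g ≠ 1 := by simpa [Subtype.ext_iff] using hg1'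
  obtain ⟨a, ha⟩ : ∃ a : X, g • a ≠ a := by
    by_contra h; push_neg at h; exact hg1 (hfaith g h)
  have horbit : MulAction.orbit N a = Set.univ := by
    have hblock : IsBlock G (orbit N a) := IsBlock.orbit_of_normal a
    have hdvd : (orbit N a).ncard ∣ Nat.card X :=
      hblock.ncard_dvd_card ⟨a, mem_orbit_self a⟩
    have h2 : 1 < (orbit N a).ncard := by
      rw [Set.one_lt_ncard_iff (Set.toFinite _)]
      exact ⟨g • a, a, ⟨⟨g, hgN⟩, rfl⟩, mem_orbit_self a, ha⟩
    have hcard := (hp.eq_one_or_self_of_dvd _ hdvd).resolve_left (by omega)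
    exact Set.eq_of_subset_of_ncard_le (Set.subset_univ _)
      (by rw [Set.ncard_univ, ← hcard]) Set.finite_univ
  have htrans : ∀ b c : X, ∃ m ∈ N, m • b = c := by
    intro b c
    have hb : b ∈ MulAction.orbit N a := horbit ▸ Set.mem_univ b
    have hc : c ∈ MulAction.orbit N a := horbit ▸ Set.mem_univ c
    obtain ⟨⟨mb, hmb⟩, rfl⟩ := hb
    obtain ⟨⟨mc, hmc⟩, rfl⟩ := hc
    exact ⟨mc * mb⁻¹, mul_mem hmc (inv_mem hmb), by
      simp [mul_smul, Subgroup.smul_def]⟩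
  -- stabilizers in N are trivial
  have hfree : ∀ m ∈ N, ∀ b : X, m • b = b → m = 1 := by
    intro m hm b hmb
    apply hfaith
    intro z
    obtain ⟨u, hu, rfl⟩ := htrans b z
    rw [← mul_smul, hcomm m hm u hu, mul_smul, hmb]
  -- N has cardinality p 
  have hcardN : Nat.card N = Nat.card X := by
    have : Function.Bijective (fun m : N => (m : G) • x) := by
      constructor
      · rintro ⟨m1, hm1⟩ ⟨m2, hm2⟩ h
        simp only at h
        have : (m2⁻¹ * m1) • x = x := by rw [mul_smul, h, ← mul_smul, inv_mul_cancel, one_smul]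
        have := hfree _ (mul_mem (inv_mem hm2) hm1) _ this
        ext; simp only
        rw [← mul_left_cancel_iff (a := m2⁻¹), inv_mul_cancel, this]
      · intro z
        obtain ⟨u, hu, huz⟩ := htrans x z
        exact ⟨⟨u, hu⟩, huz⟩
    exact Nat.card_eq_of_bijective _ this
  haveI : Fact (Nat.card X).Prime := ⟨hp⟩
  haveI hNcyc : IsCyclic N := isCyclic_of_prime_card hcardN
  obtain ⟨⟨c, hcN⟩, hgen⟩ := hNcyc.exists_generator
  have hgenG : ∀ u ∈ N, ∃ j : ℤ, c ^ j = u := by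
    intro u hu
    obtain ⟨j, hj⟩ := hgen ⟨u, hu⟩
    exact ⟨j, by simpa [Subtype.ext_iff] using hj⟩
  have horderc : orderOf c = Nat.card X := by
    rw [show c = ((⟨c, hcN⟩ : N) : G) from rfl, Subgroup.orderOf_coe,
      orderOf_eq_card_of_forall_mem_zpowers hgen, hcardN]
  -- y = c ^ k • x
  obtain ⟨u, hu, huy⟩ := htrans x y
  obtain ⟨kk, rfl⟩ := hgenG u hu
  -- σ c σ⁻¹ = c ^ a
  have hconj : σ * c * σ⁻¹ ∈ N := hNnormal.conj_mem c hcN σ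
  obtain ⟨aa, haa⟩ := hgenG _ hconj
  -- σ • y = c ^ (aa * kk) • x
  have hcm : ∀ j : ℤ, σ • (c ^ j • x) = c ^ (aa * j) • x := by
    intro j
    have : σ * c ^ j = c ^ (aa * j) * σ := by
      have h1 : (σ * c * σ⁻¹) ^ j = σ * c ^ j * σ⁻¹ := conj_zpow
      rw [← haa, ← zpow_mul] at h1
      calc σ * c ^ j = (σ * c ^ j * σ⁻¹) * σ := by group
        _ = c ^ (aa * j) * σ := by rw [← h1]
    rw [← mul_smul, this, mul_smul, hx]
  have hkey : c ^ (aa * kk) • x = c ^ kk • x := by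
    rw [← hcm kk, huy]; exact hy
  have hdvd1 : (Nat.card X : ℤ) ∣ kk * (aa - 1) := by
    have hfix : c ^ (aa * kk - kk) • (c ^ kk • x) = c ^ kk • x := by
      rw [← mul_smul, ← zpow_add, sub_add_cancel, hkey]
    have h1 : c ^ (aa * kk - kk) = 1 :=
      hfree _ (zpow_mem hcN _) _ hfix
    have := orderOf_dvd_iff_zpow_eq_one.mpr h1
    rw [horderc] at this
    convert this using 1
    ring
  have hndvdk : ¬ (Nat.card X : ℤ) ∣ kk := by
    intro hdk
    apply hxy
    have : c ^ kk = 1 := by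
      rw [← horderc] at hdk
      exact orderOf_dvd_iff_zpow_eq_one.mp hdk
    rw [← huy, this, one_smul]
  have hdvd2 : (Nat.card X : ℤ) ∣ (aa - 1) := by
    have hpz : Prime ((Nat.card X : ℤ)) := Nat.prime_iff_prime_int.mp hp
    rcases hpz.dvd_mul.mp hdvd1 with h | h
    · exact absurd h hndvdk
    · exact h
  have hca : c ^ aa = c := by
    have : c ^ (aa - 1) = 1 := by
      rw [← horderc] at hdvd2
      exact orderOf_dvd_iff_zpow_eq_one.mp hdvd2
    calc c ^ aa = c ^ (aa - 1) * c := by rw [← zpow_add_one]; ring_nf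
      _ = c := by rw [this, one_mul]
  -- σ commutes with c, hence fixes everything
  intro z
  obtain ⟨u, hu, huz⟩ := htrans x z
  obtain ⟨j, rfl⟩ := hgenG u hu
  rw [← huz, hcm j]
  have : (Nat.card X : ℤ) ∣ aa * j - j := by
    have : aa * j - j = (aa - 1) * j := by ring
    rw [this]; exact Dvd.dvd.mul_right hdvd2 j
  have h1 : c ^ (aa * j - j) = 1 := by
    rw [← horderc] at this
    exact orderOf_dvd_iff_zpow_eq_one.mp this
  calc c ^ (aa * j) • x = (c ^ (aa*j - j) * c ^ j) • x := by rw [← zpow_add]; ring_nf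
    _ = c ^ j • x := by rw [h1, one_mul]

/-- Kronecker's Theorem: let `K` be a subfield of the reals (viewed inside `ℂ`) and
`f ∈ K[X]` an irreducible polynomial of odd prime degree `p` that is solvable by
radicals over `K`. Then `f` has exactly one real root or all of its roots are real. -/
theorem kronecker (K : Subfield ℂ) (hKreal : ∀ x ∈ K, x.im = 0)
    (f : K[X]) (p : ℕ) (hp : p.Prime) (hodd : Odd p) (hdeg : f.natDegree = p)
    (hirr : Irreducible f)
    (hsolv : ∃ L : Subfield ℂ, IsRadicalExt K L ∧ ∀ z ∈ f.rootSet ℂ, z ∈ L) :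
    (∃! z : ℂ, z ∈ f.rootSet ℂ ∧ z.im = 0) ∨ (∀ z ∈ f.rootSet ℂ, z.im = 0) := by
  classical
  haveI hsplit : Fact ((f.map (algebraMap K ℂ)).Splits) := ⟨IsAlgClosed.splits _⟩
  have hsep : f.Separable := hirr.separable
  -- Step A: all roots are solvable by radicals
  have hrad : ∀ z ∈ f.rootSet ℂ, z ∈ solvableByRad K ℂ := by
    obtain ⟨L, ⟨n, cc, hc0, hcl, hstepc⟩, hroots⟩ := hsolv
    have htower : ∀ i : Fin (n + 1), cc i ≤ (solvableByRad K ℂ).toSubfield := by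
      intro i
      induction i using Fin.induction with
      | zero =>
        intro x hx
        rw [hc0] at hx
        exact (solvableByRad K ℂ).algebraMap_mem (⟨x, hx⟩ : K)
      | succ i ih =>
        obtain ⟨α, q, hq, hαq, hEq⟩ := hstepc i
        rw [hEq]
        apply Subfield.closure_le.mpr
        rintro t (ht | ht)
        · exact ih ht
        · rw [Set.mem_singleton_iff] at ht
          subst ht
          exact solvableByRad.rad_mem hq.ne_zero (ih hαq)
    intro z hz
    have := htower (Fin.last n) (by rw [hcl]; exact hroots z hz)
    exact this
  -- Step B: the Galois group is solvable
  have hfne : f ≠ 0 := fun h => hp.ne_zero (by rw [h, natDegree_zero] at hdeg; exact hdeg.symm)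
  have hcardX : Nat.card (f.rootSet ℂ) = p := by
    rw [Nat.card_eq_fintype_card, card_rootSet_eq_natDegree hsep hsplit.out, hdeg]
  have hXne : Nonempty (f.rootSet ℂ) :=
    (Nat.card_pos_iff.mp (hcardX ▸ hp.pos)).1
  obtain ⟨⟨z0, hz0⟩⟩ := hXne
  haveI : NoZeroSMulDivisors ↥K ℂ :=
    inferInstance
  haveI hgalsolv : Group.IsSolvable f.Gal :=
    solvableByRad.isSolvable' (hrad z0 hz0) hirr (mem_rootSet.mp hz0).2
  haveI hptrans : MulAction.IsPretransitive f.Gal (f.rootSet ℂ) :=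
    Polynomial.Gal.galAction_isPretransitive f ℂ hirr
  -- faithfulness
  have hfaith : ∀ g : f.Gal, (∀ x : f.rootSet ℂ, g • x = x) → g = 1 := by
    intro g hg
    apply Polynomial.Gal.galActionHom_injective f ℂ
    rw [map_one]
    ext x
    show ((Polynomial.Gal.galActionHom f ℂ g) x : ℂ) = (x : ℂ)
    have : (Polynomial.Gal.galActionHom f ℂ g) x = g • x := rfl
    rw [this, hg x]
  -- the conjugation automorphism
  have hτcomm : ∀ r : K, Complex.conjAe.toRingEquiv (algebraMap K ℂ r) = algebraMap K ℂ r := by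
    intro r
    exact Complex.conj_eq_iff_im.mpr (hKreal r r.2)
  let τ : ℂ ≃ₐ[K] ℂ := AlgEquiv.ofRingEquiv hτcomm
  let σ : f.Gal := Polynomial.Gal.restrict f ℂ τ
  have hσ : ∀ x : f.rootSet ℂ, ((σ • x : f.rootSet ℂ) : ℂ) = starRingEnd ℂ x := by
    intro x
    exact Polynomial.Gal.restrict_smul τ x
  have hσfix : ∀ x : f.rootSet ℂ, σ • x = x ↔ (x : ℂ).im = 0 := by
    intro x
    rw [← Subtype.coe_inj, hσ x]
    exact Complex.conj_eq_iff_im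
  have hσ2 : σ * σ = 1 := by
    apply hfaith
    intro x
    rw [mul_smul, ← Subtype.coe_inj, hσ, hσ, Complex.conj_conj]
  -- parity: the number of real roots is odd
  haveI hpg : IsPGroup 2 ↥(zpowers σ) := by
    have hdvd : orderOf σ ∣ 2 := orderOf_dvd_of_pow_eq_one (by rw [pow_two]; exact hσ2)
    rcases (Nat.dvd_prime Nat.prime_two).mp hdvd with h | h
    · exact IsPGroup.of_card (n := 0) (by rw [Nat.card_zpowers, h]; norm_num)
    · exact IsPGroup.of_card (n := 1) (by rw [Nat.card_zpowers, h]; norm_num)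
  have hparodd : Odd (Nat.card (fixedPoints ↥(zpowers σ) (f.rootSet ℂ))) := by
    have hmod := hpg.card_modEq_card_fixedPoints (f.rootSet ℂ)
    rw [hcardX] at hmod
    have hmod' : p % 2 = Nat.card (fixedPoints ↥(zpowers σ) (f.rootSet ℂ)) % 2 := hmod
    have hp2 : p % 2 = 1 := Nat.odd_iff.mp hodd
    rw [Nat.odd_iff]
    omega
  have hfixmem : ∀ x : f.rootSet ℂ,
      x ∈ fixedPoints ↥(zpowers σ) (f.rootSet ℂ) ↔ σ • x = x := by
    intro x
    constructor
    · intro h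
      exact h ⟨σ, mem_zpowers σ⟩
    · intro h g
      have hle : zpowers σ ≤ MulAction.stabilizer f.Gal x := zpowers_le.mpr h
      exact hle g.2
  by_cases hall : ∀ z ∈ f.rootSet ℂ, z.im = 0
  · exact Or.inr hall
  · left
    push_neg at hall
    obtain ⟨w, hw, hwim⟩ := hall
    have huniq : ∀ a b : f.rootSet ℂ, σ • a = a → σ • b = b → a = b := by
      intro a b ha hb
      by_contra hab
      have := solvable_fix_two (hcardX ▸ hp) hfaith hab ha hb ⟨w, hw⟩
      exact hwim ((hσfix ⟨w, hw⟩).mp this)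
    have hfix_ne : (fixedPoints ↥(zpowers σ) (f.rootSet ℂ)).Nonempty := by
      have hc2 := Nat.odd_iff.mp hparodd
      have hpos : 0 < Nat.card (fixedPoints ↥(zpowers σ) (f.rootSet ℂ)) := by omega
      rw [← Set.nonempty_coe_sort]
      exact (Nat.card_pos_iff.mp hpos).1
    obtain ⟨x0, hx0⟩ := hfix_ne
    have hx0fix : σ • x0 = x0 := (hfixmem x0).mp hx0
    refine ⟨↑x0, ⟨x0.2, (hσfix x0).mp hx0fix⟩, ?_⟩
    intro z hz
    have := huniq ⟨z, hz.1⟩ x0 ((hσfix ⟨z, hz.1⟩).mpr hz.2) hx0fix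
    exact congrArg Subtype.val this
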